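/- For every natural number r ≥ 1, the number of words (j_1, j_2, …, j_r) of length r over the alphabet {1,2,3} satisfying the least upward jumps rule equals (1 + 3^{r-1})/2; moreover, for r ≥ 3 this number also equals 2 + 3 + 3^2 + … + 3^{r-2}. -/
import Mathlib


/-- The set of words `(j_1, …, j_r)` of length `r` over the alphabet `{1, …, K}`
satisfying the least upward jumps rule: `j_1 = 1` and, for every `l` with
`1 ≤ l ≤ r-1`, if `j_{l+1} > max(j_1,…,j_l)` then `j_{l+1} = 1 + max(j_1,…,j_l)`. -/
def lujWords (K r : ℕ) : Set (Fin r → ℕ) :=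
  {j | (∀ i, 1 ≤ j i ∧ j i ≤ K) ∧ (∀ i : Fin r, (i : ℕ) = 0 → j i = 1) ∧
    ∀ l l' : Fin r, (l' : ℕ) = (l : ℕ) + 1 →
      ((Finset.Iic l).sup j < j l' → j l' = (Finset.Iic l).sup j + 1)}

/-- swap 2 and 3 -/
def lujSw (x : ℕ) : ℕ := if x = 2 then 3 else if x = 3 then 2 else x

lemma lujSw_lujSw (x : ℕ) : lujSw (lujSw x) = x := by
  unfold lujSw; split_ifs <;> omega

lemma lujSw_bounds {x : ℕ} (h1 : 1 ≤ x) (h2 : x ≤ 3) : 1 ≤ lujSw x ∧ lujSw x ≤ 3 := by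
  unfold lujSw; split_ifs <;> omega

lemma lujSw_one : lujSw 1 = 1 := rfl

lemma lujSw_eq_three {x : ℕ} (h : lujSw x = 3) : x = 2 := by
  unfold lujSw at h; split_ifs at h <;> omega

lemma lujSw_ge_two {x : ℕ} (h : 2 ≤ lujSw x) : 2 ≤ x := by
  unfold lujSw at h; split_ifs at h <;> omega

lemma mem_luj_iff {r : ℕ} (j : Fin r → ℕ) :
    j ∈ lujWords 3 r ↔ (∀ i, 1 ≤ j i ∧ j i ≤ 3) ∧ (∀ i : Fin r, (i : ℕ) = 0 → j i = 1) ∧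
      (∀ p : Fin r, j p = 3 → ∃ q, q < p ∧ 2 ≤ j q) := by
  constructor
  · rintro ⟨h1, h2, h3⟩
    refine ⟨h1, h2, fun p hp => ?_⟩
    have hp0 : (p : ℕ) ≠ 0 := by
      intro h0
      have := h2 p h0
      omega
    set l : Fin r := ⟨(p : ℕ) - 1, by omega⟩ with hl
    have hll : (p : ℕ) = (l : ℕ) + 1 := by simp [hl]; omega
    have hlmem : l ∈ Finset.Iic l := Finset.mem_Iic.2 le_rfl
    have hsup1 : 1 ≤ (Finset.Iic l).sup j := le_trans (h1 l).1 (Finset.le_sup hlmem)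
    have hkey : 2 ≤ (Finset.Iic l).sup j := by
      by_cases hc : (Finset.Iic l).sup j < j p
      · have := h3 l p hll hc
        omega
      · omega
    obtain ⟨q, hq, hq2⟩ := (Finset.le_sup_iff (by norm_num : (0:ℕ) < 2)).1 hkey
    exact ⟨q, by rw [Fin.lt_def]; have := Finset.mem_Iic.1 hq; rw [Fin.le_def] at this; omega, hq2⟩
  · rintro ⟨h1, h2, h3⟩
    refine ⟨h1, h2, fun l l' hll hsup => ?_⟩
    have hlmem : l ∈ Finset.Iic l := Finset.mem_Iic.2 le_rfl
    have hsup1 : 1 ≤ (Finset.Iic l).sup j := le_trans (h1 l).1 (Finset.le_sup hlmem)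
    obtain ⟨hb1, hb2⟩ := h1 l'
    interval_cases h : j l'
    · omega
    · omega
    · obtain ⟨q, hq, hq2⟩ := h3 l' h
      have hqle : q ≤ l := by
        rw [Fin.le_def]; rw [Fin.lt_def] at hq; omega
      have : 2 ≤ (Finset.Iic l).sup j := le_trans hq2 (Finset.le_sup (Finset.mem_Iic.2 hqle))
      omega

/-- all valid words: values in {1,2,3}, first letter 1 -/
def lujA (r : ℕ) : Set (Fin r → ℕ) :=
  {j | (∀ i, 1 ≤ j i ∧ j i ≤ 3) ∧ ∀ i : Fin r, (i : ℕ) = 0 → j i = 1}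

lemma luj_subset_A (r : ℕ) : lujWords 3 r ⊆ lujA r := fun j hj => by
  rw [mem_luj_iff] at hj; exact ⟨hj.1, hj.2.1⟩

lemma sw_mem_A {r : ℕ} {j : Fin r → ℕ} (hj : j ∈ lujA r) : (lujSw ∘ j) ∈ lujA r := by
  obtain ⟨h1, h2⟩ := hj
  refine ⟨fun i => lujSw_bounds (h1 i).1 (h1 i).2, fun i hi => ?_⟩
  simp [Function.comp, h2 i hi, lujSw_one]

lemma lujA_finite (r : ℕ) : (lujA r).Finite := by
  apply Set.Finite.subset (Set.Finite.pi (fun _ : Fin r => Set.finite_Iic 3))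
  intro j hj
  rw [Set.mem_pi]
  exact fun i _ => (hj.1 i).2

lemma luj_trichotomy {r : ℕ} {j : Fin r → ℕ} (hj : j ∈ lujA r) :
    (∀ p : Fin r, j p = 3 → ∃ q, q < p ∧ 2 ≤ j q) ∨
    (∀ p : Fin r, lujSw (j p) = 3 → ∃ q, q < p ∧ 2 ≤ lujSw (j q)) := by
  set s : Finset (Fin r) := Finset.univ.filter (fun p => 2 ≤ j p) with hs
  by_cases hne : s.Nonempty
  · set p₀ := s.min' hne with hp₀
    have hmem : 2 ≤ j p₀ := by
      exact (Finset.mem_filter.1 (s.min'_mem hne)).2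
    have hub : j p₀ ≤ 3 := (hj.1 p₀).2
    rcases (by omega : j p₀ = 2 ∨ j p₀ = 3) with h2 | h3
    · left
      intro p hp
      have hpmem : p ∈ s := by rw [hs]; simp; omega
      have hle : p₀ ≤ p := s.min'_le p hpmem
      have hne' : p₀ ≠ p := fun he => by rw [he] at h2; omega
      exact ⟨p₀, lt_of_le_of_ne hle hne', by omega⟩
    · right
      intro p hp
      have hp2 : j p = 2 := lujSw_eq_three hp
      have hpmem : p ∈ s := by rw [hs]; simp; omega
      have hle : p₀ ≤ p := s.min'_le p hpmem
      have hne' : p₀ ≠ p := fun he => by rw [he] at h3; omega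
      refine ⟨p₀, lt_of_le_of_ne hle hne', ?_⟩
      rw [h3]; decide
  · left
    intro p hp
    exfalso
    exact hne ⟨p, by rw [hs]; simp; omega⟩

lemma luj_both {r : ℕ} {j : Fin r → ℕ} (hj : j ∈ lujA r)
    (hC : ∀ p : Fin r, j p = 3 → ∃ q, q < p ∧ 2 ≤ j q)
    (hC' : ∀ p : Fin r, lujSw (j p) = 3 → ∃ q, q < p ∧ 2 ≤ lujSw (j q)) :
    j = fun _ => 1 := by
  by_contra hne
  have hex : ∃ p : Fin r, 2 ≤ j p := by
    by_contra hnex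
    push_neg at hnex
    exact hne (funext fun i => by have := (hj.1 i).1; have := hnex i; omega)
  set s : Finset (Fin r) := Finset.univ.filter (fun p => 2 ≤ j p) with hs
  have hne' : s.Nonempty := by
    obtain ⟨p, hp⟩ := hex; exact ⟨p, by rw [hs]; simp; omega⟩
  set p₀ := s.min' hne' with hp₀
  have hmem : 2 ≤ j p₀ := by
    exact (Finset.mem_filter.1 (s.min'_mem hne')).2
  have hub : j p₀ ≤ 3 := (hj.1 p₀).2
  rcases (by omega : j p₀ = 2 ∨ j p₀ = 3) with h2 | h3
  · obtain ⟨q, hq, hq2⟩ := hC' p₀ (by rw [h2]; decide)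
    have : 2 ≤ j q := lujSw_ge_two hq2
    have : p₀ ≤ q := s.min'_le q (by rw [hs]; simp; omega)
    exact absurd hq (not_lt.2 this)
  · obtain ⟨q, hq, hq2⟩ := hC p₀ h3
    have : p₀ ≤ q := s.min'_le q (by rw [hs]; simp; omega)
    exact absurd hq (not_lt.2 this)

lemma lujA_ncard {r : ℕ} (hr : 1 ≤ r) : (lujA r).ncard = 3 ^ (r - 1) := by
  obtain ⟨n, rfl⟩ : ∃ n, r = n + 1 := ⟨r - 1, by omega⟩
  have hA : lujA (n + 1) =
      Set.pi Set.univ (fun i : Fin (n+1) => if (i : ℕ) = 0 then {1} else Set.Icc 1 3) := by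
    ext j
    simp only [lujA, Set.mem_setOf_eq, Set.mem_pi, Set.mem_univ, forall_true_left]
    constructor
    · rintro ⟨h1, h2⟩ i
      by_cases h : (i : ℕ) = 0
      · simp [h, h2 i h]
      · simp [h, Set.mem_Icc]; exact h1 i
    · intro h
      constructor
      · intro i
        have := h i
        by_cases hi : (i : ℕ) = 0
        · simp [hi] at this; omega
        · simp [hi, Set.mem_Icc] at this; omega
      · intro i hi
        have := h i
        simp [hi] at this
        exact this
  rw [hA, ← Nat.card_coe_set_eq]
  rw [Nat.card_congr (Equiv.Set.univPi _), Nat.card_pi]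
  have hfac : ∀ i : Fin (n+1),
      Nat.card ↥(if (i : ℕ) = 0 then ({1} : Set ℕ) else Set.Icc 1 3) =
      if (i : ℕ) = 0 then 1 else 3 := by
    intro i
    by_cases h : (i : ℕ) = 0 <;> simp only [h, if_true, if_false]
    · rw [Nat.card_coe_set_eq, Set.ncard_singleton]
    · rw [Nat.card_coe_set_eq, ← Finset.coe_Icc, Set.ncard_coe_finset]
      decide
  rw [Finset.prod_congr rfl (fun i _ => hfac i)]
  rw [Fin.prod_univ_succ]
  simp [Fin.val_succ]

lemma luj_sum_aux (n : ℕ) : 2 * ∑ i ∈ Finset.Icc 1 n, 3 ^ i = 3 ^ (n + 1) - 3 := by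
  induction n with
  | zero => simp
  | succ n ih =>
    rw [Finset.sum_Icc_succ_top (by omega : 1 ≤ n + 1)]
    have h3 : 3 ≤ 3 ^ (n + 1) := by
      calc 3 = 3 ^ 1 := rfl
        _ ≤ 3 ^ (n + 1) := Nat.pow_le_pow_right (by norm_num) (by omega)
    have he : (3:ℕ) ^ (n + 2) = 3 * 3 ^ (n + 1) := by ring
    omega

/-- For every `r ≥ 1`, the number of words of length `r` over `{1,2,3}` satisfying
the least upward jumps rule equals `(1 + 3^{r-1})/2`; moreover, for `r ≥ 3` this
number also equals `2 + 3 + 3² + … + 3^{r-2}`. -/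
theorem card_lujWords_width_two (r : ℕ) (hr : 1 ≤ r) :
    (lujWords 3 r).ncard = (1 + 3 ^ (r - 1)) / 2 ∧
    (3 ≤ r → (lujWords 3 r).ncard = 2 + ∑ i ∈ Finset.Icc 1 (r - 2), 3 ^ i) := by
  set W := lujWords 3 r with hW
  set σ : (Fin r → ℕ) → (Fin r → ℕ) := fun j => lujSw ∘ j with hσ
  have hσinv : Function.Involutive σ := fun j => funext fun i => lujSw_lujSw (j i)
  have hWfin : W.Finite := (lujA_finite r).subset (luj_subset_A r)
  have hσWfin : (σ '' W).Finite := hWfin.image σ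
  have hσW_card : (σ '' W).ncard = W.ncard := Set.ncard_image_of_injective _ hσinv.injective
  -- union is A
  have hunion : W ∪ σ '' W = lujA r := by
    apply Set.Subset.antisymm
    · rintro j (hj | ⟨k, hk, rfl⟩)
      · exact luj_subset_A r hj
      · exact sw_mem_A (luj_subset_A r hk)
    · intro j hj
      rcases luj_trichotomy hj with hC | hC'
      · exact Or.inl ((mem_luj_iff j).2 ⟨hj.1, hj.2, hC⟩)
      · right
        refine ⟨σ j, ?_, hσinv j⟩
        have hjA := sw_mem_A hj
        exact (mem_luj_iff (σ j)).2 ⟨hjA.1, hjA.2, hC'⟩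
  -- intersection is the constant word
  have hone : (fun _ : Fin r => 1) ∈ W := by
    rw [hW, mem_luj_iff]
    refine ⟨fun i => by omega, fun i _ => rfl, fun p hp => by omega⟩
  have hinter : W ∩ σ '' W = {fun _ => 1} := by
    apply Set.Subset.antisymm
    · rintro j ⟨hj, k, hk, rfl⟩
      have hkA := luj_subset_A r hk
      have hσkW : σ (σ k) = k := hσinv k
      have hCσk : ∀ p : Fin r, (σ k) p = 3 → ∃ q, q < p ∧ 2 ≤ (σ k) q :=
        ((mem_luj_iff (σ k)).1 hj).2.2
      have hCk : ∀ p : Fin r, k p = 3 → ∃ q, q < p ∧ 2 ≤ k q :=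
        ((mem_luj_iff k).1 hk).2.2
      have := luj_both hkA hCk hCσk
      rw [Set.mem_singleton_iff, this]
      funext i
      simp [hσ, Function.comp, lujSw_one]
    · intro j hj
      rw [Set.mem_singleton_iff] at hj
      subst hj
      refine ⟨hone, (fun _ => 1), hone, ?_⟩
      funext i
      simp [hσ, Function.comp, lujSw_one]
  have hIE := Set.ncard_union_add_ncard_inter W (σ '' W) hWfin hσWfin
  rw [hunion, hinter, Set.ncard_singleton, hσW_card, lujA_ncard hr] at hIE
  have hcard : W.ncard = (1 + 3 ^ (r - 1)) / 2 := by omega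
  refine ⟨hcard, fun hr3 => ?_⟩
  have hsum := luj_sum_aux (r - 2)
  have he : r - 2 + 1 = r - 1 := by omega
  rw [he] at hsum
  have h3 : 3 ≤ 3 ^ (r - 1) := by
    calc (3:ℕ) = 3 ^ 1 := rfl
      _ ≤ 3 ^ (r - 1) := Nat.pow_le_pow_right (by norm_num) (by omega)
  omega
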